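/- Let A be an abelian category and (C, F) a complete cotorsion pair in A. Then (C, F) is hereditary (i.e. both resolving and coresolving) if and only if it is resolving, if and only if it is coresolving. -/

import Mathlib

open CategoryTheory CategoryTheory.Limits

universe v u

namespace Paper

variable {C : Type u} [Category.{v} C] [Abelian C]

/-- `Ext¹(A, B) = 0`, expressed by the property that every short exact sequence
`0 → B → E → A → 0` splits. -/
def Ext1Zero (A B : C) : Prop :=
  ∀ ⦃E : C⦄ (i : B ⟶ E) (p : E ⟶ A) (w : i ≫ p = 0),
    Mono i → Epi p → (ShortComplex.mk i p w).Exact → ∃ r : E ⟶ B, i ≫ r = 𝟙 B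

/-- `0 → X → Y → Z → 0` is a short exact sequence. -/
def IsSES {X Y Z : C} (i : X ⟶ Y) (p : Y ⟶ Z) : Prop :=
  Mono i ∧ Epi p ∧ ∃ w : i ≫ p = 0, (ShortComplex.mk i p w).Exact

/-- `(Q, F)` is a cotorsion pair: `Q^⊥ = F` and `^⊥F = Q` with respect to `Ext¹`. -/
structure CotorsionPair (Q F : C → Prop) : Prop where
  right_eq : ∀ B, F B ↔ ∀ A, Q A → Ext1Zero A B
  left_eq : ∀ A, Q A ↔ ∀ B, F B → Ext1Zero A B

/-- Completeness of a cotorsion pair: every object admits approximations on both sides. -/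
def CompletePair (Q F : C → Prop) : Prop :=
  ∀ M : C,
    (∃ (D E : C) (i : D ⟶ E) (p : E ⟶ M), IsSES i p ∧ F D ∧ Q E) ∧
    (∃ (D' E' : C) (i : M ⟶ D') (p : D' ⟶ E'), IsSES i p ∧ F D' ∧ Q E')

/-- `Q` is closed under kernels of epimorphisms between objects of `Q`. -/
def Resolving (Q : C → Prop) : Prop :=
  ∀ ⦃X Y Z : C⦄ (i : X ⟶ Y) (p : Y ⟶ Z), IsSES i p → Q Y → Q Z → Q X

/-- `F` is closed under cokernels of monomorphisms between objects of `F`. -/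
def Coresolving (F : C → Prop) : Prop :=
  ∀ ⦃X Y Z : C⦄ (i : X ⟶ Y) (p : Y ⟶ Z), IsSES i p → F X → F Y → F Z

/-- A thick subcategory: closed under direct summands, extensions, kernels of
epimorphisms and cokernels of monomorphisms. -/
structure Thick (W : C → Prop) : Prop where
  retract : ∀ ⦃X Y : C⦄ (s : X ⟶ Y) (r : Y ⟶ X), s ≫ r = 𝟙 X → W Y → W X
  extensions : ∀ ⦃X Y Z : C⦄ (i : X ⟶ Y) (p : Y ⟶ Z), IsSES i p → W X → W Z → W Y
  ker_of_epi : ∀ ⦃X Y Z : C⦄ (i : X ⟶ Y) (p : Y ⟶ Z), IsSES i p → W Y → W Z → W X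
  coker_of_mono : ∀ ⦃X Y Z : C⦄ (i : X ⟶ Y) (p : Y ⟶ Z), IsSES i p → W X → W Y → W Z

/-- A Hovey triple `(Q, W, R)`: `W` is thick and both `(Q, W ∩ R)` and `(Q ∩ W, R)`
are complete cotorsion pairs. -/
structure HoveyTriple (Q W R : C → Prop) : Prop where
  thick : Thick W
  cp₁ : CotorsionPair Q (fun X => W X ∧ R X)
  complete₁ : CompletePair Q (fun X => W X ∧ R X)
  cp₂ : CotorsionPair (fun X => Q X ∧ W X) R
  complete₂ : CompletePair (fun X => Q X ∧ W X) R

/-- `(Q, W, R)` is a hereditary Hovey triple. -/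
def HereditaryHoveyTriple (Q W R : C → Prop) : Prop :=
  HoveyTriple Q W R ∧
    (Resolving Q ∧ Coresolving (fun X => W X ∧ R X)) ∧
    (Resolving (fun X => Q X ∧ W X) ∧ Coresolving R)

-- auxiliary lemmas


namespace IsSES

variable {X Y Z : C} {i : X ⟶ Y} {p : Y ⟶ Z}

lemma w (h : IsSES i p) : i ≫ p = 0 := h.2.2.choose

lemma exact (h : IsSES i p) :
    (ShortComplex.mk i p h.w).Exact := h.2.2.choose_spec

lemma split_section (h : IsSES i p) (hr : ∃ r : Y ⟶ X, i ≫ r = 𝟙 X) :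
    ∃ s : Z ⟶ Y, s ≫ p = 𝟙 Z := by
  haveI : Epi p := h.2.1
  obtain ⟨r, hr⟩ := hr
  have hw : i ≫ (𝟙 Y - r ≫ i) = 0 := by
    simp [Preadditive.comp_sub, reassoc_of% hr]
  refine ⟨h.exact.desc (𝟙 Y - r ≫ i) hw, ?_⟩
  have h2 := h.exact.g_desc (𝟙 Y - r ≫ i) hw
  rw [← cancel_epi p]
  dsimp at h2 ⊢
  rw [← Category.assoc, h2]
  simp [Preadditive.sub_comp, h.w]

lemma split_retraction (h : IsSES i p) (hs : ∃ s : Z ⟶ Y, s ≫ p = 𝟙 Z) :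
    ∃ r : Y ⟶ X, i ≫ r = 𝟙 X := by
  haveI : Mono i := h.1
  obtain ⟨s, hs⟩ := hs
  have hw : (𝟙 Y - p ≫ s) ≫ p = 0 := by
    simp [Preadditive.sub_comp, Category.assoc, hs]
  refine ⟨h.exact.lift (𝟙 Y - p ≫ s) hw, ?_⟩
  have h2 := h.exact.lift_f (𝟙 Y - p ≫ s) hw
  rw [← cancel_mono i]
  dsimp at h2 ⊢
  rw [Category.assoc, h2]
  simp [Preadditive.comp_sub, reassoc_of% h.w]

end IsSES

lemma Ext1Zero.of_isSES {A B : C} (h : Ext1Zero A B) {E : C} {i : B ⟶ E} {p : E ⟶ A}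
    (hses : IsSES i p) : ∃ r : E ⟶ B, i ≫ r = 𝟙 B :=
  h i p hses.w hses.1 hses.2.1 hses.exact

lemma isSES_kernel {Y Z : C} (p : Y ⟶ Z) [Epi p] : IsSES (kernel.ι p) p := by
  refine ⟨inferInstance, inferInstance, kernel.condition p, ?_⟩
  exact ShortComplex.exact_of_f_is_kernel _ (kernelIsKernel p)

lemma isSES_cokernel {X Y : C} (i : X ⟶ Y) [Mono i] : IsSES i (cokernel.π i) := by
  refine ⟨inferInstance, inferInstance, cokernel.condition i, ?_⟩
  exact ShortComplex.exact_of_g_is_cokernel _ (cokernelIsCokernel i)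

lemma isSES_pullback {X Y Z L : C} {m : X ⟶ Y} {p : Y ⟶ Z} (h : IsSES m p) (u : L ⟶ Z) :
    ∃ κ : X ⟶ pullback p u, κ ≫ pullback.fst p u = m ∧ IsSES κ (pullback.snd p u) := by
  haveI : Mono m := h.1
  haveI : Epi p := h.2.1
  have hmp : m ≫ p = (0 : X ⟶ L) ≫ u := by rw [h.w, zero_comp]
  refine ⟨pullback.lift m 0 hmp, pullback.lift_fst _ _ _, ?_, ?_, ?_, ?_⟩
  · have : Mono (pullback.lift m 0 hmp ≫ pullback.fst p u) := by
      rw [pullback.lift_fst]; infer_instance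
    exact mono_of_mono _ (pullback.fst p u)
  · infer_instance
  · exact pullback.lift_snd _ _ _
  · haveI : Mono (pullback.lift m 0 hmp) := by
      have : Mono (pullback.lift m 0 hmp ≫ pullback.fst p u) := by
        rw [pullback.lift_fst]; infer_instance
      exact mono_of_mono _ (pullback.fst p u)
    apply ShortComplex.exact_of_f_is_kernel
    refine KernelFork.IsLimit.ofι' _ _ (fun {A} k hk => ?_)
    have hk' : (k ≫ pullback.fst p u) ≫ p = 0 := by
      rw [Category.assoc, pullback.condition, ← Category.assoc, hk, zero_comp]
    refine ⟨h.exact.lift (k ≫ pullback.fst p u) hk', ?_⟩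
    apply pullback.hom_ext
    · have h3 := h.exact.lift_f (k ≫ pullback.fst p u) hk'
      simp only [Category.assoc] at h3 ⊢
      erw [pullback.lift_fst]
      exact h3
    · simp only [Category.assoc]
      erw [pullback.lift_snd, comp_zero]
      exact hk.symm

lemma isSES_pushout {X Y Z L : C} {m : X ⟶ Y} {p : Y ⟶ Z} (h : IsSES m p) (u : X ⟶ L) :
    ∃ δ : pushout m u ⟶ Z, pushout.inl m u ≫ δ = p ∧ IsSES (pushout.inr m u) δ := by
  haveI : Mono m := h.1
  haveI : Epi p := h.2.1
  have hup : m ≫ p = u ≫ (0 : L ⟶ Z) := by rw [h.w, comp_zero]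
  refine ⟨pushout.desc p 0 hup, pushout.inl_desc _ _ _, ?_, ?_, ?_, ?_⟩
  · infer_instance
  · have : Epi (pushout.inl m u ≫ pushout.desc p 0 hup) := by
      rw [pushout.inl_desc]; infer_instance
    exact epi_of_epi (pushout.inl m u) _
  · exact pushout.inr_desc _ _ _
  · haveI : Epi (pushout.desc p 0 hup) := by
      have : Epi (pushout.inl m u ≫ pushout.desc p 0 hup) := by
        rw [pushout.inl_desc]; infer_instance
      exact epi_of_epi (pushout.inl m u) _
    apply ShortComplex.exact_of_g_is_cokernel
    refine CokernelCofork.IsColimit.ofπ' _ _ (fun {A} k hk => ?_)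
    have hk' : m ≫ (pushout.inl m u ≫ k) = 0 := by
      rw [← Category.assoc, pushout.condition, Category.assoc, hk, comp_zero]
    refine ⟨h.exact.desc (pushout.inl m u ≫ k) hk', ?_⟩
    apply pushout.hom_ext
    · have h3 := h.exact.g_desc (pushout.inl m u ≫ k) hk'
      simp only [← Category.assoc] at h3 ⊢
      erw [pushout.inl_desc]
      exact h3
    · simp only [← Category.assoc]
      erw [pushout.inr_desc, zero_comp]
      exact hk.symm

lemma resolving_to_coresolving {Q F : C → Prop} (hcp : CotorsionPair Q F)
    (hcomplete : CompletePair Q F) (hres : Resolving Q) : Coresolving F := by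
  intro X Y Z m p hses hX hY
  rw [hcp.right_eq]
  intro A hA
  intro E i π w hi hπ hexact
  haveI : Mono i := hi
  haveI : Epi π := hπ
  obtain ⟨K', G', kι, v, hses', hK', hG'⟩ := (hcomplete E).1
  haveI : Epi v := hses'.2.1
  haveI : Epi (v ≫ π) := epi_comp _ _
  have hsesL : IsSES (kernel.ι (v ≫ π)) (v ≫ π) := isSES_kernel (v ≫ π)
  have hL : Q (kernel (v ≫ π)) := hres (kernel.ι (v ≫ π)) (v ≫ π) hsesL hG' hA
  have hw0 : (kernel.ι (v ≫ π) ≫ v) ≫ π = 0 := by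
    rw [Category.assoc]; exact kernel.condition (v ≫ π)
  set u : kernel (v ≫ π) ⟶ Z := hexact.lift (kernel.ι (v ≫ π) ≫ v) hw0 with hudef
  have hu : u ≫ i = kernel.ι (v ≫ π) ≫ v := hexact.lift_f _ _
  have hE1 : Ext1Zero (kernel (v ≫ π)) X := (hcp.left_eq _).mp hL X hX
  obtain ⟨κ, hκ, hsesPB⟩ := isSES_pullback hses u
  obtain ⟨σ, hσ⟩ := hsesPB.split_section (hE1.of_isSES hsesPB)
  set ut : kernel (v ≫ π) ⟶ Y := σ ≫ pullback.fst p u with huu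
  have hut : ut ≫ p = u := by
    rw [huu, Category.assoc, pullback.condition, ← Category.assoc, hσ, Category.id_comp]
  obtain ⟨δ, hδ, hsesPO⟩ := isSES_pushout hsesL ut
  have hE2 : Ext1Zero A Y := (hcp.right_eq Y).mp hY A hA
  obtain ⟨s, hs⟩ := hsesPO.split_section (hE2.of_isSES hsesPO)
  have hcomm : kernel.ι (v ≫ π) ≫ v = ut ≫ (p ≫ i) := by
    rw [← Category.assoc, hut, hu]
  set φ : pushout (kernel.ι (v ≫ π)) ut ⟶ E := pushout.desc v (p ≫ i) hcomm with hφdef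
  have hφπ : φ ≫ π = δ := by
    apply pushout.hom_ext
    · rw [← Category.assoc, hφdef, pushout.inl_desc, hδ]
    · rw [← Category.assoc, hφdef, pushout.inr_desc, Category.assoc, w, comp_zero, hsesPO.w]
  have hsec : (s ≫ φ) ≫ π = 𝟙 A := by rw [Category.assoc, hφπ, hs]
  have hsesξ : IsSES i π := ⟨hi, hπ, w, hexact⟩
  exact hsesξ.split_retraction ⟨s ≫ φ, hsec⟩

lemma coresolving_to_resolving {Q F : C → Prop} (hcp : CotorsionPair Q F)
    (hcomplete : CompletePair Q F) (hcor : Coresolving F) : Resolving Q := by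
  intro X Y Z m p hses hY hZ
  rw [hcp.left_eq]
  intro B hB
  intro E i π w hi hπ hexact
  haveI : Mono i := hi
  haveI : Epi π := hπ
  obtain ⟨D', C', w', c', hses', hD', hC'⟩ := (hcomplete E).2
  haveI : Mono w' := hses'.1
  haveI : Mono (i ≫ w') := mono_comp _ _
  have hsesL : IsSES (i ≫ w') (cokernel.π (i ≫ w')) := isSES_cokernel (i ≫ w')
  have hL : F (cokernel (i ≫ w')) := hcor (i ≫ w') (cokernel.π (i ≫ w')) hsesL hB hD'
  have hw0 : i ≫ (w' ≫ cokernel.π (i ≫ w')) = 0 := by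
    rw [← Category.assoc]; exact cokernel.condition (i ≫ w')
  set u' : X ⟶ cokernel (i ≫ w') := hexact.desc (w' ≫ cokernel.π (i ≫ w')) hw0 with hu'def
  have hu' : π ≫ u' = w' ≫ cokernel.π (i ≫ w') := hexact.g_desc _ _
  have hE1 : Ext1Zero Z (cokernel (i ≫ w')) := (hcp.right_eq _).mp hL Z hZ
  obtain ⟨δ, hδ, hsesPO⟩ := isSES_pushout hses u'
  obtain ⟨ρ, hρ⟩ := hE1.of_isSES hsesPO
  set ut : Y ⟶ cokernel (i ≫ w') := pushout.inl m u' ≫ ρ with huu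
  have hmut : m ≫ ut = u' := by
    rw [huu, ← Category.assoc, pushout.condition, Category.assoc, hρ, Category.comp_id]
  obtain ⟨κ, hκ, hsesPB⟩ := isSES_pullback hsesL ut
  have hE2 : Ext1Zero Y B := (hcp.left_eq Y).mp hY B hB
  obtain ⟨rT, hrT⟩ := hE2.of_isSES hsesPB
  have hcomm : w' ≫ cokernel.π (i ≫ w') = (π ≫ m) ≫ ut := by
    rw [Category.assoc, hmut, hu']
  set φ : E ⟶ pullback (cokernel.π (i ≫ w')) ut := pullback.lift w' (π ≫ m) hcomm with hφdef
  have hiφ : i ≫ φ = κ := by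
    apply pullback.hom_ext
    · rw [Category.assoc, hφdef, pullback.lift_fst, hκ]
    · rw [Category.assoc, hφdef, pullback.lift_snd, ← Category.assoc, w, zero_comp, hsesPB.w]
  exact ⟨φ ≫ rT, by rw [← Category.assoc, hiφ, hrT]⟩

end Paper

open Paper in
theorem stmt0 {C : Type u} [CategoryTheory.Category.{v} C] [CategoryTheory.Abelian C]
    (Q F : C → Prop) (hcp : CotorsionPair Q F) (hcomplete : CompletePair Q F) :
    ((Resolving Q ∧ Coresolving F) ↔ Resolving Q) ∧
    ((Resolving Q ∧ Coresolving F) ↔ Coresolving F) := by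
  have h1 : Resolving Q → Coresolving F := resolving_to_coresolving hcp hcomplete
  have h2 : Coresolving F → Resolving Q := coresolving_to_resolving hcp hcomplete
  exact ⟨⟨fun h => h.1, fun h => ⟨h, h1 h⟩⟩, ⟨fun h => h.2, fun h => ⟨h2 h, h⟩⟩⟩
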